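/- arXiv:2304.14047 — 5 statements merged into one kernel-verified Lean document; each statement's English description precedes it below -/
import Mathlib

section
/- Let E : ℝ^N → ℝ be convex and differentiable, and let F(σ) := E(σ²) where σ² denotes the componentwise square map (σ₁², …, σ_N²). If σ̂ is a local minimizer of F on ℝ^N, then σ̂² is a global minimizer of E on the nonnegative cone ℝ₊^N. -/
/-- A local minimizer of `F σ = E (σ²)` (componentwise square) gives, via squaring,
a global minimizer of the convex function `E` over the nonnegative cone. -/
theorem stmt_1 {N : ℕ} (E : (Fin N → ℝ) → ℝ)
    (hconv : ConvexOn ℝ Set.univ E) (hdiff : Differentiable ℝ E)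
    (F : (Fin N → ℝ) → ℝ) (hF : F = fun σ => E (fun i => σ i ^ 2))
    (σ : Fin N → ℝ) (hmin : IsLocalMin F σ) :
    ∀ ν : Fin N → ℝ, (∀ i, 0 ≤ ν i) → E (fun i => σ i ^ 2) ≤ E ν := by
  intro ν hν
  set x : Fin N → ℝ := fun i => σ i ^ 2 with hx
  set s : ℝ → (Fin N → ℝ) :=
    fun t i => (if σ i < 0 then (-1 : ℝ) else 1) * Real.sqrt ((1 - t) * σ i ^ 2 + t * ν i)
    with hs
  have hs0 : s 0 = σ := by
    funext i
    simp only [hs]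
    rw [show (1 - (0:ℝ)) * σ i ^ 2 + 0 * ν i = σ i ^ 2 by ring, Real.sqrt_sq_eq_abs]
    by_cases h : σ i < 0
    · simp [h, abs_of_neg h]
    · simp [h, abs_of_nonneg (not_lt.1 h)]
  have hcont : ContinuousAt s 0 := by
    apply continuousAt_pi.2
    intro i
    apply Continuous.continuousAt
    fun_prop
  have htend : Filter.Tendsto s (nhds 0) (nhds σ) := by
    rw [← hs0]; exact hcont
  have hev : ∀ᶠ t in nhds (0:ℝ), F σ ≤ F (s t) := htend.eventually hmin
  have h2 : ∀ᶠ t in nhdsWithin (0:ℝ) (Set.Ioi 0),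
      (F σ ≤ F (s t)) ∧ t ∈ Set.Ioo (0:ℝ) 1 := by
    filter_upwards [nhdsWithin_le_nhds hev,
      Ioo_mem_nhdsGT_of_mem (by norm_num : (0:ℝ) ∈ Set.Ico 0 1)] with t h1 h2
    exact ⟨h1, h2⟩
  obtain ⟨t, ht, ht0, ht1⟩ := h2.exists
  have hnn : ∀ i, 0 ≤ (1 - t) * σ i ^ 2 + t * ν i := fun i =>
    add_nonneg (mul_nonneg (by linarith) (sq_nonneg _)) (mul_nonneg ht0.le (hν i))
  have heq : F (s t) = E ((1 - t) • x + t • ν) := by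
    rw [hF]
    show E (fun i => s t i ^ 2) = E ((1 - t) • x + t • ν)
    congr 1
    funext i
    simp only [hs, Pi.add_apply, Pi.smul_apply, smul_eq_mul, mul_pow,
      Real.sq_sqrt (hnn i), hx]
    by_cases h : σ i < 0 <;> simp [h]
  have hc := hconv.2 (Set.mem_univ x) (Set.mem_univ ν)
    (by linarith : (0:ℝ) ≤ 1 - t) ht0.le (by ring)
  rw [heq] at ht
  have hFσ : F σ = E x := by rw [hF]
  rw [hFσ] at ht
  simp only [smul_eq_mul] at hc
  have : E x ≤ (1 - t) * E x + t * E ν := le_trans ht hc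
  nlinarith [ht0]
end

section
/- Let E : ℝ^N → ℝ be convex with symmetric positive semidefinite Hessian H at a point μ* ∈ ℝ₊^N, where μ* is a minimizer of E over ℝ₊^N. Suppose (μ* + ker H) ∩ ℝ₊^N = {μ*}. Then there exists λ > 0 such that (ν − μ*)ᵀ H (ν − μ*) ≥ λ ‖ν − μ*‖² for all ν ∈ ℝ₊^N. -/
open Matrix

/-- If the PSD Hessian `H` of a convex function at a constrained minimizer `μ` satisfies
`(μ + ker H) ∩ ℝ₊ᴺ = {μ}`, then the quadratic form of `H` is coercive in the directions
of the cone: `(ν-μ)ᵀ H (ν-μ) ≥ λ ‖ν-μ‖²` for all `ν ≥ 0`. -/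
theorem stmt_5 {N : ℕ} (E : (Fin N → ℝ) → ℝ)
    (hconv : ConvexOn ℝ Set.univ E) (hE : ContDiff ℝ 2 E)
    (H : Matrix (Fin N) (Fin N) ℝ)
    (μ : Fin N → ℝ) (hμ : ∀ i, 0 ≤ μ i)
    (hHess : ∀ v w : Fin N → ℝ, iteratedFDeriv ℝ 2 E μ ![v, w] = v ⬝ᵥ H.mulVec w)
    (hPSD : H.PosSemidef)
    (hmin : ∀ ν : Fin N → ℝ, (∀ i, 0 ≤ ν i) → E μ ≤ E ν)
    (hker : ∀ v : Fin N → ℝ, H.mulVec v = 0 → (∀ i, 0 ≤ μ i + v i) → v = 0) :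
    ∃ lam > 0, ∀ ν : Fin N → ℝ, (∀ i, 0 ≤ ν i) →
      lam * ∑ i, (ν i - μ i) ^ 2 ≤ (ν - μ) ⬝ᵥ H.mulVec (ν - μ) := by
  classical
  -- the cone of feasible directions
  set C : Set (Fin N → ℝ) := {w | ∀ i, μ i = 0 → 0 ≤ w i} with hC
  -- key: kernel directions in C are zero
  have key : ∀ w ∈ C, H.mulVec w = 0 → w = 0 := by
    intro w hw hHw
    have h1 : ∀ᶠ t : ℝ in nhdsWithin 0 (Set.Ioi 0), ∀ i, 0 ≤ μ i + t * w i := by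
      rw [Filter.eventually_all]
      intro i
      rcases (hμ i).eq_or_lt with h | h
      · filter_upwards [self_mem_nhdsWithin] with t ht
        have := hw i h.symm
        have ht' : (0:ℝ) < t := ht
        nlinarith
      · have hcont : Filter.Tendsto (fun t : ℝ => μ i + t * w i)
            (nhdsWithin 0 (Set.Ioi 0)) (nhds (μ i + 0 * w i)) :=
          ((continuous_const.add ((continuous_id).mul continuous_const)).tendsto 0).mono_left
            nhdsWithin_le_nhds
        have := hcont.eventually (eventually_gt_nhds (show (0:ℝ) < μ i + 0 * w i by simpa using h))
        filter_upwards [this] with t ht using le_of_lt ht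
    have h2 : ∀ᶠ t : ℝ in nhdsWithin 0 (Set.Ioi 0), (0:ℝ) < t := self_mem_nhdsWithin
    obtain ⟨t, ht1, ht2⟩ := (h1.and h2).exists
    have hz : H.mulVec (t • w) = 0 := by rw [Matrix.mulVec_smul, hHw, smul_zero]
    have := hker (t • w) hz (by intro i; simpa using ht1 i)
    rcases smul_eq_zero.mp this with h | h
    · exact absurd h (ne_of_gt ht2)
    · exact h
  -- quadratic form facts
  have hq0 : ∀ x : Fin N → ℝ, 0 ≤ x ⬝ᵥ H.mulVec x := by
    intro x
    have := hPSD.dotProduct_mulVec_nonneg x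
    simpa [star_trivial] using this
  have hqzero : ∀ x : Fin N → ℝ, x ⬝ᵥ H.mulVec x = 0 → H.mulVec x = 0 := by
    intro x hx
    exact (hPSD.dotProduct_mulVec_zero_iff x).mp (by simpa [star_trivial] using hx)
  -- continuity of q
  have hqcont : Continuous fun x : Fin N → ℝ => x ⬝ᵥ H.mulVec x := by
    simp only [Matrix.mulVec, dotProduct]
    exact continuous_finset_sum _ fun i _ =>
      (continuous_apply i).mul
        (continuous_finset_sum _ fun j _ => continuous_const.mul (continuous_apply j))
  -- the compact set S
  set S : Set (Fin N → ℝ) := {w | w ∈ C ∧ ∑ i, w i ^ 2 = 1} with hS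
  have hSclosed : IsClosed S := by
    have h1 : IsClosed C := by
      have : C = ⋂ i ∈ {i | μ i = 0}, {w : Fin N → ℝ | 0 ≤ w i} := by
        ext w; simp [hC]
      rw [this]
      exact isClosed_biInter fun i _ =>
        isClosed_le continuous_const (continuous_apply i)
    have h2 : IsClosed {w : Fin N → ℝ | ∑ i, w i ^ 2 = 1} :=
      isClosed_eq (by fun_prop) continuous_const
    exact h1.inter h2
  have hSbdd : Bornology.IsBounded S := by
    apply Bornology.IsBounded.subset (Metric.isBounded_closedBall (x := (0 : Fin N → ℝ)) (r := 1))
    intro w hw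
    simp only [Metric.mem_closedBall, dist_zero_right]
    rw [pi_norm_le_iff_of_nonneg zero_le_one]
    intro i
    have h1 : w i ^ 2 ≤ 1 := by
      rw [← hw.2]
      exact Finset.single_le_sum (fun j _ => sq_nonneg (w j)) (Finset.mem_univ i)
    rw [Real.norm_eq_abs]
    nlinarith [sq_abs (w i), abs_nonneg (w i)]
  have hScompact : IsCompact S := Metric.isCompact_of_isClosed_isBounded hSclosed hSbdd
  -- normalization lemma
  have hnorm : ∀ x : Fin N → ℝ, x ∈ C → 0 < ∑ i, x i ^ 2 →
      (Real.sqrt (∑ i, x i ^ 2))⁻¹ • x ∈ S := by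
    intro x hx hpos
    have hsqrt : (0:ℝ) < Real.sqrt (∑ i, x i ^ 2) := Real.sqrt_pos.mpr hpos
    have hcpos : (0:ℝ) < (Real.sqrt (∑ i, x i ^ 2))⁻¹ := inv_pos.mpr hsqrt
    constructor
    · intro i hi
      have := hx i hi
      simp only [Pi.smul_apply, smul_eq_mul]
      positivity
    · have h1 : ∑ i, ((Real.sqrt (∑ j, x j ^ 2))⁻¹ • x) i ^ 2
          = (Real.sqrt (∑ j, x j ^ 2))⁻¹ ^ 2 * ∑ i, x i ^ 2 := by
        rw [Finset.mul_sum]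
        exact Finset.sum_congr rfl fun i _ => by
          simp [Pi.smul_apply, smul_eq_mul, mul_pow]
      rw [h1, inv_pow, Real.sq_sqrt hpos.le]
      exact inv_mul_cancel₀ (ne_of_gt hpos)
  by_cases hne : S.Nonempty
  · obtain ⟨w₀, hw₀S, hmin'⟩ := hScompact.exists_isMinOn hne hqcont.continuousOn
    refine ⟨w₀ ⬝ᵥ H.mulVec w₀, ?_, ?_⟩
    · rcases (hq0 w₀).eq_or_lt with h | h
      · exfalso
        have hzero := key w₀ hw₀S.1 (hqzero w₀ h.symm)
        have h2 : ∑ i, w₀ i ^ 2 = 1 := hw₀S.2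
        rw [hzero] at h2
        simp at h2
      · exact h
    · intro ν hν
      have hvC : (ν - μ) ∈ C := by
        intro i hi
        simp only [Pi.sub_apply, hi, sub_zero]
        exact hν i
      have hseq : ∑ i, ((ν - μ) i) ^ 2 = ∑ i, (ν i - μ i) ^ 2 := by
        simp [Pi.sub_apply]
      rcases (Finset.sum_nonneg fun i _ => sq_nonneg ((ν - μ) i) :
          (0:ℝ) ≤ ∑ i, ((ν - μ) i) ^ 2).eq_or_lt with h | h
      · -- zero direction
        have hv0 : ν - μ = 0 := by
          funext i
          have := (Finset.sum_eq_zero_iff_of_nonneg fun j _ => sq_nonneg ((ν - μ) j)).mp h.symm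
            i (Finset.mem_univ i)
          exact pow_eq_zero_iff (n := 2) (by norm_num) |>.mp this
        rw [← hseq, ← h, mul_zero, hv0]
        simp
      · -- normalize
        have hwS := hnorm (ν - μ) hvC h
        have hle : w₀ ⬝ᵥ H.mulVec w₀ ≤
            ((Real.sqrt (∑ i, ((ν - μ) i) ^ 2))⁻¹ • (ν - μ)) ⬝ᵥ
              H.mulVec ((Real.sqrt (∑ i, ((ν - μ) i) ^ 2))⁻¹ • (ν - μ)) := hmin' hwS
        set c : ℝ := (Real.sqrt (∑ i, ((ν - μ) i) ^ 2))⁻¹ with hcdef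
        have hsqrt : (0:ℝ) < Real.sqrt (∑ i, ((ν - μ) i) ^ 2) := Real.sqrt_pos.mpr h
        have hcpos : 0 < c := inv_pos.mpr hsqrt
        have hqsm : (c • (ν - μ)) ⬝ᵥ H.mulVec (c • (ν - μ))
            = c ^ 2 * ((ν - μ) ⬝ᵥ H.mulVec (ν - μ)) := by
          rw [Matrix.mulVec_smul, dotProduct_smul, smul_dotProduct]
          simp [smul_eq_mul]; ring
        rw [hqsm] at hle
        have hc2 : c ^ 2 * ∑ i, ((ν - μ) i) ^ 2 = 1 := by
          rw [hcdef, inv_pow, Real.sq_sqrt h.le]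
          exact inv_mul_cancel₀ (ne_of_gt h)
        rw [← hseq]
        nlinarith [mul_le_mul_of_nonneg_right hle (le_of_lt h), hc2, hq0 (ν - μ)]
  · refine ⟨1, one_pos, ?_⟩
    intro ν hν
    have hvC : (ν - μ) ∈ C := by
      intro i hi
      simp only [Pi.sub_apply, hi, sub_zero]
      exact hν i
    have hseq : ∑ i, ((ν - μ) i) ^ 2 = ∑ i, (ν i - μ i) ^ 2 := by
      simp [Pi.sub_apply]
    rcases (Finset.sum_nonneg fun i _ => sq_nonneg ((ν - μ) i) :
        (0:ℝ) ≤ ∑ i, ((ν - μ) i) ^ 2).eq_or_lt with h | h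
    · rw [← hseq, ← h, mul_zero]
      exact hq0 _
    · exact absurd ⟨_, hnorm (ν - μ) hvC h⟩ hne
end

section
/- Let E : ℝ^N → ℝ be convex and twice differentiable, and let μ* ∈ ℝ₊^N be a minimizer of E over ℝ₊^N such that (μ* + ker Hess E(μ*)) ∩ ℝ₊^N = {μ*}. Then μ* is the unique minimizer of E over ℝ₊^N. -/
open Matrix

/-- Well-posedness: if `(μ + ker Hess E(μ)) ∩ ℝ₊ᴺ = {μ}` at a minimizer `μ` of the convex
twice differentiable `E` over the nonnegative cone, then `μ` is the unique minimizer. -/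
theorem stmt_6 {N : ℕ} (E : (Fin N → ℝ) → ℝ)
    (hconv : ConvexOn ℝ Set.univ E) (hE : ContDiff ℝ 2 E)
    (H : Matrix (Fin N) (Fin N) ℝ)
    (μ : Fin N → ℝ) (hμ : ∀ i, 0 ≤ μ i)
    (hHess : ∀ v w : Fin N → ℝ, iteratedFDeriv ℝ 2 E μ ![v, w] = v ⬝ᵥ H.mulVec w)
    (hmin : ∀ ν : Fin N → ℝ, (∀ i, 0 ≤ ν i) → E μ ≤ E ν)
    (hker : ∀ v : Fin N → ℝ, H.mulVec v = 0 → (∀ i, 0 ≤ μ i + v i) → v = 0) :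
    ∀ ν : Fin N → ℝ, (∀ i, 0 ≤ ν i) →
      (∀ ρ : Fin N → ℝ, (∀ i, 0 ≤ ρ i) → E ν ≤ E ρ) → ν = μ := by
  intro ν hν hνmin
  classical
  set v : Fin N → ℝ := ν - μ with hv
  -- basic differentiability facts
  have hEdiff : Differentiable ℝ E := hE.differentiable (by norm_num)
  have hf'diff : Differentiable ℝ (fderiv ℝ E) :=
    (hE.fderiv_right (m := 1) (by norm_num)).differentiable (by norm_num)
  have hline : ∀ (w : Fin N → ℝ) (t : ℝ), HasDerivAt (fun s : ℝ => μ + s • w) w t := by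
    intro w t
    simpa using ((hasDerivAt_id t).smul_const w).const_add μ
  have hg1 : ∀ (w : Fin N → ℝ) (t : ℝ),
      HasDerivAt (fun s : ℝ => E (μ + s • w)) (fderiv ℝ E (μ + t • w) w) t := by
    intro w t
    exact (hEdiff (μ + t • w)).hasFDerivAt.comp_hasDerivAt t (hline w t)
  have hg2 : ∀ w : Fin N → ℝ,
      HasDerivAt (fun s : ℝ => fderiv ℝ E (μ + s • w) w) (fderiv ℝ (fderiv ℝ E) μ w w) 0 := by
    intro w
    have h1 : HasDerivAt (fun s : ℝ => fderiv ℝ E (μ + s • w)) (fderiv ℝ (fderiv ℝ E) μ w) 0 := by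
      have := (hf'diff (μ + (0:ℝ) • w)).hasFDerivAt.comp_hasDerivAt (x := (0:ℝ)) (hline w 0)
      simp only [zero_smul, add_zero] at this
      exact this
    simpa using h1.clm_apply (hasDerivAt_const 0 w)
  -- the second derivative is the quadratic form of H
  have hB : ∀ a b : Fin N → ℝ, fderiv ℝ (fderiv ℝ E) μ a b = a ⬝ᵥ H.mulVec b := by
    intro a b
    have h2 := (iteratedFDeriv_two_apply E μ ![a, b]).symm.trans (hHess a b)
    simpa using h2
  -- symmetry of the second derivative
  have hsym : ∀ a b : Fin N → ℝ,
      fderiv ℝ (fderiv ℝ E) μ a b = fderiv ℝ (fderiv ℝ E) μ b a := by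
    intro a b
    exact (hE.contDiffAt.isSymmSndFDerivAt (by simp)).eq a b
  -- slices of E along lines through μ are convex
  have hgconv : ∀ w : Fin N → ℝ, ConvexOn ℝ Set.univ (fun s : ℝ => E (μ + s • w)) := by
    intro w
    have h := hconv.comp_affineMap (AffineMap.lineMap μ (μ + w) : ℝ →ᵃ[ℝ] (Fin N → ℝ))
    have hfun : (fun s : ℝ => E (μ + s • w))
        = E ∘ (AffineMap.lineMap μ (μ + w) : ℝ →ᵃ[ℝ] (Fin N → ℝ)) := by
      funext s
      simp [AffineMap.lineMap_apply, add_sub_cancel_left, add_comm]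
    rw [hfun]
    simpa using h
  -- the Hessian is positive semidefinite
  have hPSD : ∀ w : Fin N → ℝ, 0 ≤ w ⬝ᵥ H.mulVec w := by
    intro w
    rw [← hB w w]
    have hmono : MonotoneOn (deriv fun s : ℝ => E (μ + s • w)) Set.univ :=
      (hgconv w).monotoneOn_deriv (fun x _ => (hg1 w x).differentiableAt)
    have hderiv_eq : (deriv fun s : ℝ => E (μ + s • w))
        = fun s : ℝ => fderiv ℝ E (μ + s • w) w := by
      funext s; exact (hg1 w s).deriv
    have htend : Filter.Tendsto (slope (fun s : ℝ => fderiv ℝ E (μ + s • w) w) 0)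
        (nhdsWithin 0 {(0:ℝ)}ᶜ) (nhds (fderiv ℝ (fderiv ℝ E) μ w w)) :=
      hasDerivAt_iff_tendsto_slope.mp (hg2 w)
    refine ge_of_tendsto htend ?_
    filter_upwards [self_mem_nhdsWithin] with t ht
    have hslope : slope (fun s : ℝ => fderiv ℝ E (μ + s • w) w) 0 t
        = (fderiv ℝ E (μ + t • w) w - fderiv ℝ E (μ + (0:ℝ) • w) w) / t := by
      rw [slope_def_field, sub_zero]
    rw [hslope]
    rcases lt_or_gt_of_ne (ht : t ≠ 0) with htneg | htpos
    · have hle : fderiv ℝ E (μ + t • w) w ≤ fderiv ℝ E (μ + (0:ℝ) • w) w := by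
        have := hmono (Set.mem_univ t) (Set.mem_univ (0:ℝ)) htneg.le
        rwa [hderiv_eq] at this
      exact div_nonneg_iff.mpr (Or.inr ⟨by linarith, htneg.le⟩)
    · have hle : fderiv ℝ E (μ + (0:ℝ) • w) w ≤ fderiv ℝ E (μ + t • w) w := by
        have := hmono (Set.mem_univ (0:ℝ)) (Set.mem_univ t) htpos.le
        rwa [hderiv_eq] at this
      exact div_nonneg (by linarith) htpos.le
  -- E is constant on the segment [μ, ν]
  have hEν : E ν = E μ := le_antisymm (hνmin μ hμ) (hmin ν hν)
  have hconst : ∀ t ∈ Set.Icc (0:ℝ) 1, E (μ + t • v) = E μ := by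
    intro t ht
    have hcomb : μ + t • v = (1 - t) • μ + t • ν := by
      rw [hv]; module
    rw [hcomb]
    refine le_antisymm ?_ ?_
    · have h := hconv.2 (Set.mem_univ μ) (Set.mem_univ ν) (sub_nonneg.mpr ht.2) ht.1
        (by ring)
      simp only [smul_eq_mul] at h
      calc E ((1 - t) • μ + t • ν) ≤ (1 - t) * E μ + t * E ν := h
        _ = E μ := by rw [hEν]; ring
    · refine hmin _ (fun i => ?_)
      have : ((1 - t) • μ + t • ν) i = (1 - t) * μ i + t * ν i := by simp
      rw [this]
      have h1 : 0 ≤ (1 - t) * μ i := mul_nonneg (by linarith [ht.2]) (hμ i)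
      have h2 : 0 ≤ t * ν i := mul_nonneg ht.1 (hν i)
      linarith
  -- hence the first derivative along v at 0 vanishes
  have hNeBot : (nhdsWithin (0:ℝ) (Set.Ioi 0)).NeBot := by infer_instance
  have hIoo : Set.Ioo (0:ℝ) 1 ∈ nhdsWithin (0:ℝ) (Set.Ioi 0) :=
    Ioo_mem_nhdsGT_of_mem ⟨le_refl 0, zero_lt_one⟩
  have hmono_le : nhdsWithin (0:ℝ) (Set.Ioi 0) ≤ nhdsWithin (0:ℝ) {(0:ℝ)}ᶜ :=
    nhdsWithin_mono 0 (fun x hx => ne_of_gt (Set.mem_Ioi.mp hx))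
  have hd1 : fderiv ℝ E μ v = 0 := by
    have htend : Filter.Tendsto (slope (fun s : ℝ => E (μ + s • v)) 0)
        (nhdsWithin 0 (Set.Ioi (0:ℝ))) (nhds (fderiv ℝ E (μ + (0:ℝ) • v) v)) :=
      (hasDerivAt_iff_tendsto_slope.mp (hg1 v 0)).mono_left hmono_le
    have hzero : Filter.Tendsto (slope (fun s : ℝ => E (μ + s • v)) 0)
        (nhdsWithin 0 (Set.Ioi (0:ℝ))) (nhds 0) := by
      refine Filter.Tendsto.congr' ?_ tendsto_const_nhds
      filter_upwards [hIoo] with t ht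
      have h0 : E (μ + t • v) = E μ := hconst t ⟨ht.1.le, ht.2.le⟩
      have h00 : E (μ + (0:ℝ) • v) = E μ := by simp
      simp [slope_def_field, h0, h00]
    simpa using tendsto_nhds_unique htend hzero
  -- the first derivative along v vanishes on (0,1)
  have hd1' : ∀ t ∈ Set.Ioo (0:ℝ) 1, fderiv ℝ E (μ + t • v) v = 0 := by
    intro t ht
    have hloc : (fun s : ℝ => E (μ + s • v)) =ᶠ[nhds t] (fun _ => E μ) := by
      filter_upwards [Ioo_mem_nhds ht.1 ht.2] with s hs
      exact hconst s ⟨hs.1.le, hs.2.le⟩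
    have hzero : HasDerivAt (fun s : ℝ => E (μ + s • v)) 0 t :=
      (hasDerivAt_const t (E μ)).congr_of_eventuallyEq hloc
    exact (hg1 v t).unique hzero
  -- hence the second derivative along v at 0 vanishes
  have hvHv : v ⬝ᵥ H.mulVec v = 0 := by
    rw [← hB v v]
    have htend : Filter.Tendsto (slope (fun s : ℝ => fderiv ℝ E (μ + s • v) v) 0)
        (nhdsWithin 0 (Set.Ioi (0:ℝ))) (nhds (fderiv ℝ (fderiv ℝ E) μ v v)) :=
      (hasDerivAt_iff_tendsto_slope.mp (hg2 v)).mono_left hmono_le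
    have hzero : Filter.Tendsto (slope (fun s : ℝ => fderiv ℝ E (μ + s • v) v) 0)
        (nhdsWithin 0 (Set.Ioi (0:ℝ))) (nhds 0) := by
      refine Filter.Tendsto.congr' ?_ tendsto_const_nhds
      filter_upwards [hIoo] with t ht
      simp [slope_def_field, hd1' t ht, hd1]
    exact (tendsto_nhds_unique hzero htend).symm
  -- PSD + quadratic form vanishing on v forces H v = 0
  have hcross : ∀ w : Fin N → ℝ, w ⬝ᵥ H.mulVec v = 0 := by
    intro w
    set a : ℝ := v ⬝ᵥ H.mulVec w + w ⬝ᵥ H.mulVec v with ha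
    set b : ℝ := w ⬝ᵥ H.mulVec w with hb
    have hbnn : 0 ≤ b := hPSD w
    have key : ∀ t : ℝ, 0 ≤ t * a + t ^ 2 * b := by
      intro t
      have hexp : (v + t • w) ⬝ᵥ H.mulVec (v + t • w)
          = v ⬝ᵥ H.mulVec v + t * a + t ^ 2 * b := by
        simp [mulVec_add, mulVec_smul, add_dotProduct, dotProduct_add, dotProduct_smul,
          smul_dotProduct, smul_eq_mul, ha, hb]
        ring
      have := hPSD (v + t • w)
      rw [hexp, hvHv] at this
      linarith
    have ha0 : a = 0 := by
      rcases eq_or_lt_of_le hbnn with hb0 | hb0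
      · have h1 := key 1
        have h2 := key (-1)
        have h1' : 0 ≤ a + b := by linarith [h1]
        have h2' : 0 ≤ -a + b := by linarith [h2]
        linarith
      · have hk := key (-(a / (2 * b)))
        have hb0' : b ≠ 0 := ne_of_gt hb0
        have heq : -(a / (2 * b)) * a + (-(a / (2 * b))) ^ 2 * b = -(a ^ 2) / (4 * b) := by
          field_simp
          ring
        have h2 : 0 ≤ -(a ^ 2) / (4 * b) := by rw [← heq]; exact hk
        have h4 : (0:ℝ) < 4 * b := by linarith
        have h3 : a ^ 2 ≤ 0 := by
          by_contra hcon
          push_neg at hcon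
          have : -(a ^ 2) / (4 * b) < 0 := div_neg_of_neg_of_pos (by linarith) h4
          linarith
        have ha2 : a ^ 2 = 0 := le_antisymm h3 (sq_nonneg a)
        exact pow_eq_zero_iff two_ne_zero |>.mp ha2
    have hsymvw : v ⬝ᵥ H.mulVec w = w ⬝ᵥ H.mulVec v := by
      rw [← hB v w, ← hB w v]; exact hsym v w
    rw [ha, hsymvw] at ha0
    linarith
  have hHv : H.mulVec v = 0 := by
    funext i
    have := hcross (Pi.single i 1)
    simpa [single_dotProduct] using this
  have hv0 : v = 0 := by
    refine hker v hHv (fun i => ?_)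
    have : μ i + v i = ν i := by simp [hv]
    rw [this]; exact hν i
  have : ν - μ = 0 := hv0
  exact sub_eq_zero.mp this
end

section
/- Let K be a linear subspace of ℝ^N and μ* ∈ ℝ₊^N with (μ* + K) ∩ ℝ₊^N = {μ*}. Then there exists C > 0 such that ‖π_{K⊥}(ν − μ*)‖ ≥ C ‖ν − μ*‖ for all ν ∈ ℝ₊^N, where π_{K⊥} is the orthogonal projection onto the orthogonal complement of K. -/
/-- Geometric claim: if `(μ + K) ∩ ℝ₊ᴺ = {μ}` for a subspace `K`, then the orthogonal
projection onto `Kᗮ` is bounded below on cone directions: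
`‖π_{K⊥}(ν - μ)‖ ≥ C ‖ν - μ‖` for all `ν ≥ 0`. -/
theorem stmt_7 {N : ℕ} (K : Submodule ℝ (EuclideanSpace ℝ (Fin N)))
    (μ : EuclideanSpace ℝ (Fin N)) (hμ : ∀ i, 0 ≤ μ i)
    (hK : ∀ v ∈ K, (∀ i, 0 ≤ μ i + v i) → v = 0) :
    ∃ C > 0, ∀ ν : EuclideanSpace ℝ (Fin N), (∀ i, 0 ≤ ν i) →
      C * ‖ν - μ‖ ≤ ‖(Submodule.orthogonalProjectionOnto Kᗮ (ν - μ) : EuclideanSpace ℝ (Fin N))‖ := by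
  classical
  set P : Set (EuclideanSpace ℝ (Fin N)) := {y | ∀ i, μ i = 0 → 0 ≤ y i} with hP
  -- K ∩ P = {0}
  have hKP : ∀ v ∈ K, v ∈ P → v = 0 := by
    intro v hv hvP
    set s : Finset ℝ := insert (1:ℝ)
      (Finset.univ.image (fun i => if v i < 0 then μ i / (-v i) else 1)) with hs
    have hsne : s.Nonempty := ⟨1, Finset.mem_insert_self _ _⟩
    set t : ℝ := s.min' hsne with ht
    have htpos : 0 < t := by
      apply (Finset.lt_min'_iff s hsne).mpr
      intro y hy
      rcases Finset.mem_insert.mp hy with h | h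
      · simp [h]
      · obtain ⟨i, _, rfl⟩ := Finset.mem_image.mp h
        by_cases hvi : v i < 0
        · have hμi : 0 < μ i := by
            rcases lt_or_eq_of_le (hμ i) with h' | h'
            · exact h'
            · exact absurd (hvP i h'.symm) (not_le.mpr hvi)
          simp only [hvi, if_true]
          exact div_pos hμi (by linarith)
        · simp [hvi]
    have hkey : ∀ i, 0 ≤ μ i + t * v i := by
      intro i
      by_cases hvi : v i < 0
      · have hmem : μ i / (-v i) ∈ s := by
          apply Finset.mem_insert_of_mem
          apply Finset.mem_image.mpr
          exact ⟨i, Finset.mem_univ i, by simp [hvi]⟩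
        have hle : t ≤ μ i / (-v i) := Finset.min'_le s _ hmem
        have : t * (-v i) ≤ μ i := by
          rw [← le_div_iff₀ (by linarith)] ; exact hle
        linarith
      · push_neg at hvi
        nlinarith [hμ i, htpos]
    have := hK (t • v) (K.smul_mem t hv) (by
      intro i
      have : (t • v) i = t * v i := rfl
      rw [this]; exact hkey i)
    rcases smul_eq_zero.mp this with h | h
    · exact absurd h (ne_of_gt htpos)
    · exact h
  set f : EuclideanSpace ℝ (Fin N) → ℝ :=
    fun y => ‖(Submodule.orthogonalProjectionOnto Kᗮ y : EuclideanSpace ℝ (Fin N))‖ with hf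
  have hfcont : Continuous f :=
    (continuous_subtype_val.comp (Submodule.orthogonalProjectionOnto Kᗮ).continuous).norm
  have hfker : ∀ y, f y = 0 → y ∈ K := by
    intro y hy
    have h1 : (Submodule.orthogonalProjectionOnto Kᗮ y : EuclideanSpace ℝ (Fin N)) = 0 := by
      simpa using norm_eq_zero.mp hy
    have h2 : Submodule.orthogonalProjectionOnto Kᗮ y = 0 := Subtype.ext (by simpa using h1)
    have h3 : y ∈ Kᗮᗮ := by
      rwa [Submodule.orthogonalProjectionOnto_eq_zero_iff] at h2
    rwa [Submodule.orthogonal_orthogonal] at h3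
  set S : Set (EuclideanSpace ℝ (Fin N)) := P ∩ Metric.sphere 0 1 with hS
  have hPclosed : IsClosed P := by
    have hrw : P = ⋂ i, {y : EuclideanSpace ℝ (Fin N) | μ i = 0 → 0 ≤ y i} := by
      ext y; simp [hP, Set.mem_iInter]
    rw [hrw]
    exact isClosed_iInter fun i => by
      by_cases h : μ i = 0
      · simp only [h, forall_true_left]
        exact isClosed_le continuous_const (EuclideanSpace.proj i).continuous
      · convert isClosed_univ using 1
        ext y; simp [h]
  have hScpt : IsCompact S := ((isCompact_sphere (0:EuclideanSpace ℝ (Fin N)) 1).inter_left hPclosed)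
  by_cases hSne : S.Nonempty
  · obtain ⟨y0, hy0S, hy0min⟩ := hScpt.exists_isMinOn hSne hfcont.continuousOn
    have hy0pos : 0 < f y0 := by
      rcases lt_or_eq_of_le (show (0:ℝ) ≤ f y0 from norm_nonneg _) with h | h
      · exact h
      · exfalso
        have hy0K := hfker y0 h.symm
        have hz := hKP y0 hy0K hy0S.1
        have h1 : ‖y0‖ = 1 := mem_sphere_zero_iff_norm.mp hy0S.2
        rw [hz] at h1; simp at h1
    refine ⟨f y0, hy0pos, ?_⟩
    intro ν hν
    by_cases hd : ν - μ = 0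
    · rw [hd]; simp
    · set d : EuclideanSpace ℝ (Fin N) := ν - μ with hdd
      have hdn : ‖d‖ ≠ 0 := norm_ne_zero_iff.mpr hd
      set y : EuclideanSpace ℝ (Fin N) := ‖d‖⁻¹ • d with hy
      have hyS : y ∈ S := by
        constructor
        · intro i hi
          have hdi : 0 ≤ d i := by
            have h' : d i = ν i - μ i := rfl
            rw [h', hi]; simpa using hν i
          have h' : y i = ‖d‖⁻¹ * d i := rfl
          rw [h']
          exact mul_nonneg (inv_nonneg.mpr (norm_nonneg _)) hdi
        · rw [mem_sphere_zero_iff_norm, hy, norm_smul]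
          simp [abs_of_nonneg (inv_nonneg.mpr (norm_nonneg d)), inv_mul_cancel₀ hdn]
      have hle := hy0min hyS
      have hfy : f y = ‖d‖⁻¹ * f d := by
        rw [hf]; simp only [hy, map_smul]
        rw [Submodule.coe_smul, norm_smul]
        simp [abs_of_nonneg (inv_nonneg.mpr (norm_nonneg d))]
      have hle' : f y0 ≤ ‖d‖⁻¹ * f d := by rw [← hfy]; exact hle
      have hpos : 0 < ‖d‖ := lt_of_le_of_ne (norm_nonneg _) (Ne.symm hdn)
      have : f y0 * ‖d‖ ≤ f d := by
        calc f y0 * ‖d‖ ≤ (‖d‖⁻¹ * f d) * ‖d‖ :=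
              mul_le_mul_of_nonneg_right hle' (norm_nonneg _)
          _ = f d := by field_simp
      exact this
  · refine ⟨1, one_pos, ?_⟩
    intro ν hν
    by_cases hd : ν - μ = 0
    · rw [hd]; simp
    · exfalso
      apply hSne
      set d : EuclideanSpace ℝ (Fin N) := ν - μ with hdd
      have hdn : ‖d‖ ≠ 0 := norm_ne_zero_iff.mpr hd
      refine ⟨‖d‖⁻¹ • d, ?_, ?_⟩
      · intro i hi
        have hdi : 0 ≤ d i := by
          have h' : d i = ν i - μ i := rfl
          rw [h', hi]; simpa using hν i
        have h' : (‖d‖⁻¹ • d) i = ‖d‖⁻¹ * d i := rfl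
        rw [h']
        exact mul_nonneg (inv_nonneg.mpr (norm_nonneg _)) hdi
      · rw [mem_sphere_zero_iff_norm, norm_smul]
        simp [abs_of_nonneg (inv_nonneg.mpr (norm_nonneg d)), inv_mul_cancel₀ hdn]
end

section
/- Let F : ℝ^N → ℝ be C² with Hess F ⪰ λ·I on a convex set U (λ ∈ ℝ, possibly negative), let τ > 0 satisfy λτ + 2 > 0, and let the implicit Euler sequence σ^{ℓ+1} satisfy ∇F(σ^{ℓ+1}) = −(σ^{ℓ+1} − σ^ℓ)/τ with segment [σ^ℓ, σ^{ℓ+1}] ⊂ U. Then F(σ^ℓ) − F(σ^{ℓ+1}) ≥ ((λτ + 2)/(2τ)) ‖σ^{ℓ+1} − σ^ℓ‖². -/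
open InnerProductSpace Set

/-- Descent estimate for one backward Euler step: if `Hess F ⪰ λ I` on a convex set `U`
containing the segment between iterates, `τ > 0` and `λτ + 2 > 0`, then
`F(σˡ) − F(σˡ⁺¹) ≥ ((λτ + 2)/(2τ)) ‖σˡ⁺¹ − σˡ‖²`. -/
theorem stmt_16 {N : ℕ} (F : EuclideanSpace ℝ (Fin N) → ℝ) (hF : ContDiff ℝ 2 F)
    (U : Set (EuclideanSpace ℝ (Fin N))) (hU : Convex ℝ U) (lam : ℝ)
    (hHess : ∀ ξ ∈ U, ∀ v : EuclideanSpace ℝ (Fin N),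
      lam * ‖v‖ ^ 2 ≤ iteratedFDeriv ℝ 2 F ξ ![v, v])
    (τ : ℝ) (hτ : 0 < τ) (hlt : 0 < lam * τ + 2)
    (σ : ℕ → EuclideanSpace ℝ (Fin N))
    (hstep : ∀ ℓ, gradient F (σ (ℓ + 1)) = (-(1 / τ)) • (σ (ℓ + 1) - σ ℓ))
    (hseg : ∀ ℓ, segment ℝ (σ ℓ) (σ (ℓ + 1)) ⊆ U) :
    ∀ ℓ, ((lam * τ + 2) / (2 * τ)) * ‖σ (ℓ + 1) - σ ℓ‖ ^ 2 ≤ F (σ ℓ) - F (σ (ℓ + 1)) := by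
  intro ℓ
  set x := σ ℓ with hx
  set y := σ (ℓ + 1) with hy
  set v := x - y with hv
  set g : ℝ → ℝ := fun t => F (y + t • v) with hg
  set L : ℝ → EuclideanSpace ℝ (Fin N) := fun t => y + t • v with hLdef
  have hFdiff : Differentiable ℝ F := hF.differentiable (by norm_num)
  have hD : ContDiff ℝ 1 (fderiv ℝ F) := hF.fderiv_right (by norm_num)
  have hL : ∀ t : ℝ, HasDerivAt L v t := by
    intro t
    have := ((hasDerivAt_id t).smul_const v).const_add y
    rw [one_smul] at this
    exact this
  -- first derivative of g
  have hg1 : ∀ t : ℝ, HasDerivAt g (fderiv ℝ F (L t) v) t := fun t =>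
    (hFdiff (L t)).hasFDerivAt.comp_hasDerivAt t (hL t)
  have hdg : deriv g = fun t => fderiv ℝ F (L t) v := funext fun t => (hg1 t).deriv
  -- second derivative of g
  have hg2 : ∀ t : ℝ, HasDerivAt (deriv g) (iteratedFDeriv ℝ 2 F (L t) ![v, v]) t := by
    intro t
    have h1 : HasDerivAt (fun s => fderiv ℝ F (L s)) (fderiv ℝ (fderiv ℝ F) (L t) v) t :=
      ((hD.differentiable one_ne_zero) (L t)).hasFDerivAt.comp_hasDerivAt t (hL t)
    have h2 := h1.clm_apply (hasDerivAt_const t v)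
    rw [hdg]
    have : iteratedFDeriv ℝ 2 F (L t) ![v, v] = fderiv ℝ (fderiv ℝ F) (L t) v v := by
      rw [iteratedFDeriv_two_apply]; simp
    rw [this]
    simpa using h2
  -- membership in U along the segment
  have hmem : ∀ t ∈ Icc (0 : ℝ) 1, L t ∈ U := by
    intro t ht
    apply hseg ℓ
    rw [← hx, ← hy, segment_symm, segment_eq_image']
    exact ⟨t, ht, rfl⟩
  -- Taylor with Lagrange remainder on [0,1]
  have hgC : ContDiff ℝ 2 g := by
    have hline : ContDiff ℝ 2 L := contDiff_const.add (contDiff_id.smul contDiff_const)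
    exact hF.comp hline
  have hunique : UniqueDiffOn ℝ (Icc (0 : ℝ) 1) := uniqueDiffOn_Icc one_pos
  have hEq1 : ∀ t ∈ Icc (0 : ℝ) 1, iteratedDerivWithin 1 g (Icc 0 1) t = deriv g t := by
    intro t ht
    rw [iteratedDerivWithin_one, hdg]
    exact (hg1 t).hasDerivWithinAt.derivWithin (hunique t ht)
  have htay := taylor_mean_remainder_lagrange (f := g) (n := 1) (x₀ := 0) (x := 1) zero_ne_one
    (hgC.contDiffOn.of_le (by norm_num))
    (by
      rw [uIcc_of_le zero_le_one, uIoo_of_le zero_le_one]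
      apply DifferentiableOn.congr (f := deriv g)
      · exact fun t _ => ((hg2 t).differentiableAt).differentiableWithinAt
      · exact fun t ht => hEq1 t (Ioo_subset_Icc_self ht))
  rw [uIcc_of_le zero_le_one, uIoo_of_le zero_le_one] at htay
  obtain ⟨c, hc, hcc⟩ := htay
  -- identify the Taylor polynomial
  have htp : taylorWithinEval g 1 (Icc (0:ℝ) 1) 0 1 = g 0 + deriv g 0 := by
    rw [taylorWithinEval_succ, taylor_within_zero_eval,
      hEq1 0 (by norm_num : (0:ℝ) ∈ Icc (0:ℝ) 1)]
    norm_num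
  -- identify the second derivative at c
  have hc2 : iteratedDerivWithin 2 g (Icc (0:ℝ) 1) c = iteratedFDeriv ℝ 2 F (L c) ![v, v] := by
    have hcIcc : c ∈ Icc (0:ℝ) 1 := Ioo_subset_Icc_self hc
    rw [iteratedDerivWithin_succ]
    have : derivWithin (iteratedDerivWithin 1 g (Icc (0:ℝ) 1)) (Icc 0 1) c
        = derivWithin (deriv g) (Icc (0:ℝ) 1) c := derivWithin_congr hEq1 (hEq1 c hcIcc)
    rw [this, (hg2 c).hasDerivWithinAt.derivWithin (hunique c hcIcc)]
  -- lower bound on second derivative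
  have hUc : L c ∈ U := hmem c (Ioo_subset_Icc_self hc)
  have hHc : lam * ‖v‖ ^ 2 ≤ iteratedDerivWithin 2 g (Icc (0:ℝ) 1) c := by
    rw [hc2]; exact hHess (L c) hUc v
  -- compute deriv g 0
  have hL0 : L 0 = y := by simp [hLdef]
  have hgrad : fderiv ℝ F y = toDual ℝ _ (gradient F y) := by
    have := (hFdiff y).hasGradientAt
    rw [hasGradientAt_iff_hasFDerivAt] at this
    exact this.fderiv
  have hd0 : deriv g 0 = (1 / τ) * ‖v‖ ^ 2 := by
    rw [hdg]
    simp only [hL0, hgrad, toDual_apply_apply, (show gradient F y = _ from hstep ℓ), ← hx, ← hy]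
    rw [real_inner_smul_left]
    have : y - x = -v := by rw [hv]; abel
    rw [hv, this, inner_neg_left, real_inner_self_eq_norm_sq]
    ring
  -- put everything together
  have hg0 : g 0 = F y := by simp [hg]
  have hg1' : g 1 = F x := by
    have h1 : y + (1:ℝ) • v = x := by rw [hv, one_smul]; abel
    show F (y + (1:ℝ) • v) = F x
    rw [h1]
  rw [htp, hd0, hg0, hg1'] at hcc
  norm_num [Nat.factorial] at hcc
  have hnorm : ‖y - x‖ = ‖v‖ := by rw [hv, norm_sub_rev]
  rw [hnorm]
  have h2 : lam * ‖v‖ ^ 2 / 2 ≤ F x - (F y + τ⁻¹ * ‖v‖ ^ 2) := by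
    rw [hcc]; linarith
  have hτ' : τ ≠ 0 := ne_of_gt hτ
  rw [div_mul_eq_mul_div, div_le_iff₀ (by positivity)]
  nlinarith [mul_le_mul_of_nonneg_left h2 (by linarith : (0:ℝ) ≤ 2 * τ),
    mul_inv_cancel₀ hτ', sq_nonneg ‖v‖]
end
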